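/- For any n ≥ 1 and any real r ≥ 0, the number of permutations π of {1,…,n} with at most r inversions satisfies log |B(id, r)| ≤ n·log(1 + r/n) + n. -/

import Mathlib

set_option maxRecDepth 10000



/-- The number of inversions of a permutation (Kendall tau distance to the identity). -/
def inversions {n : ℕ} (π : Equiv.Perm (Fin n)) : ℕ :=
  (Finset.univ.filter (fun p : Fin n × Fin n => p.1 < p.2 ∧ π p.2 < π p.1)).card

def code {n : ℕ} (π : Equiv.Perm (Fin n)) (i : Fin n) : ℕ :=
  (Finset.univ.filter (fun j => i < j ∧ π j < π i)).card

lemma sum_code {n : ℕ} (π : Equiv.Perm (Fin n)) : ∑ i, code π i = inversions π := by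
  simp only [inversions, code, Finset.card_filter, Fintype.sum_prod_type]

lemma code_apply {n : ℕ} (π : Equiv.Perm (Fin n)) (i : Fin n) :
    (π i : ℕ) = code π i + (Finset.univ.filter (fun j => j < i ∧ π j < π i)).card := by
  have h1 : Finset.univ.filter (fun j => π j < π i) = (Finset.Iio (π i)).image π.symm := by
    ext j
    simp only [Finset.mem_filter, Finset.mem_univ, true_and, Finset.mem_image,
      Finset.mem_Iio]
    constructor
    · intro h; exact ⟨π j, h, by simp⟩
    · rintro ⟨v, hv, rfl⟩; simpa using hv
  have h1c : (Finset.univ.filter (fun j => π j < π i)).card = (π i : ℕ) := by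
    rw [h1, Finset.card_image_of_injective _ π.symm.injective, Fin.card_Iio]
  have h2 : (Finset.univ.filter (fun j => π j < π i))
      = (Finset.univ.filter (fun j => j < i ∧ π j < π i))
        ∪ (Finset.univ.filter (fun j => i < j ∧ π j < π i)) := by
    ext j
    simp only [Finset.mem_filter, Finset.mem_union, Finset.mem_univ, true_and]
    rcases lt_trichotomy j i with h | h | h
    · tauto
    · subst h; simp
    · tauto
  have h3 : Disjoint (Finset.univ.filter (fun j => j < i ∧ π j < π i))
      (Finset.univ.filter (fun j => i < j ∧ π j < π i)) := by
    rw [Finset.disjoint_filter]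
    rintro j _ ⟨hj, _⟩ ⟨hj', _⟩
    exact absurd (hj.trans hj') (lt_irrefl _)
  rw [← h1c, h2, Finset.card_union_of_disjoint h3, code]
  ring

lemma code_not_lt {n : ℕ} (π σ : Equiv.Perm (Fin n)) (i : Fin n)
    (hc : code π i = code σ i) (hagree : ∀ j, j < i → π j = σ j) : ¬ π i < σ i := by
  intro hlt
  set A := Finset.univ.filter (fun j => j < i ∧ π j < π i) with hA
  set B := Finset.univ.filter (fun j => j < i ∧ σ j < σ i) with hB
  have hBeq : B = Finset.univ.filter (fun j => j < i ∧ π j < σ i) := by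
    apply Finset.filter_congr
    intro j _
    constructor
    · rintro ⟨h1, h2⟩; exact ⟨h1, by rwa [hagree j h1]⟩
    · rintro ⟨h1, h2⟩; exact ⟨h1, by rwa [← hagree j h1]⟩
  have hπ := code_apply π i
  have hσ := code_apply σ i
  rw [← hA] at hπ
  rw [← hB] at hσ
  have hAB : A ⊆ B := by
    rw [hBeq]
    intro j hj
    simp only [hA, Finset.mem_filter, Finset.mem_univ, true_and] at hj ⊢
    exact ⟨hj.1, hj.2.trans hlt⟩
  have hcard : (B \ A).card = B.card - A.card := Finset.card_sdiff_of_subset hAB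
  have hmap : (B \ A).card ≤ (Finset.Ioo (π i) (σ i)).card := by
    apply Finset.card_le_card_of_injOn (fun j => π j)
    · intro j hj
      rw [hBeq, Finset.mem_coe] at hj
      simp only [hA, Finset.mem_sdiff, Finset.mem_filter, Finset.mem_univ, true_and,
        not_and, not_lt] at hj
      obtain ⟨⟨hji, hjσ⟩, hge⟩ := hj
      have hge' := hge hji
      have hne : π j ≠ π i := fun hh => absurd (π.injective hh) (ne_of_lt hji)
      rw [Finset.mem_coe, Finset.mem_Ioo]
      exact ⟨lt_of_le_of_ne hge' (Ne.symm hne), hjσ⟩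
    · intro a _ b _ hab
      exact π.injective hab
  rw [Fin.card_Ioo] at hmap
  have hlt' : (π i : ℕ) < (σ i : ℕ) := hlt
  omega

lemma code_injective {n : ℕ} (π σ : Equiv.Perm (Fin n)) (h : ∀ i, code π i = code σ i) :
    π = σ := by
  have key : ∀ i : Fin n, (∀ j, j < i → π j = σ j) → π i = σ i := by
    intro i hj
    have h1 := code_not_lt π σ i (h i) hj
    have h2 := code_not_lt σ π i (h i).symm (fun j hji => (hj j hji).symm)
    exact le_antisymm (not_lt.1 h2) (not_lt.1 h1)
  have H : ∀ m : ℕ, ∀ i : Fin n, (i : ℕ) < m → π i = σ i := by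
    intro m
    induction m with
    | zero => intro i hi; omega
    | succ m ih =>
      intro i hi
      apply key
      intro j hji
      apply ih
      have : (j : ℕ) < (i : ℕ) := hji
      omega
  exact Equiv.ext fun i => H (i + 1) i (Nat.lt_succ_self _)

def multOf {n : ℕ} (k : ℕ) (π : Equiv.Perm (Fin n)) : Multiset (Fin (n + 1)) :=
  Multiset.replicate (k - inversions π) 0 + ∑ i : Fin n, Multiset.replicate (code π i) i.succ

lemma card_multOf {n k : ℕ} {π : Equiv.Perm (Fin n)} (h : inversions π ≤ k) :
    Multiset.card (multOf k π) = k := by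
  have key : ∀ (s : Finset (Fin n)),
      Multiset.card (∑ i ∈ s, Multiset.replicate (code π i) i.succ) = ∑ i ∈ s, code π i := by
    intro s
    induction s using Finset.cons_induction with
    | empty => simp
    | cons a s ha ih => simp [Finset.sum_cons, ih]
  rw [multOf, Multiset.card_add, Multiset.card_replicate, key, sum_code]
  omega

lemma count_multOf {n k : ℕ} (π : Equiv.Perm (Fin n)) (i : Fin n) :
    Multiset.count i.succ (multOf k π) = code π i := by
  rw [multOf, Multiset.count_add, Multiset.count_replicate,
    if_neg (Fin.succ_ne_zero i).symm, Multiset.count_sum']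
  simp [Multiset.count_replicate, Fin.succ_inj]

open Classical in
lemma card_le_choose (n k : ℕ) :
    (Finset.univ.filter (fun π : Equiv.Perm (Fin n) => inversions π ≤ k)).card
      ≤ (n + k).choose k := by
  classical
  have hstep : (Finset.univ.filter
      (fun π : Equiv.Perm (Fin n) => inversions π ≤ k)).card
        ≤ Fintype.card (Sym (Fin (n + 1)) k) := by
    rw [← Finset.card_univ]
    refine Finset.card_le_card_of_injOn
      (t := (Finset.univ : Finset (Sym (Fin (n + 1)) k)))
      (fun π => if h : Multiset.card (multOf k π) = k
        then (⟨multOf k π, h⟩ : Sym (Fin (n + 1)) k) else Sym.replicate k 0)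
      (fun π _ => Finset.mem_univ _) ?_
    · intro π hπ σ hσ hfeq
      simp only [Finset.mem_coe, Finset.mem_filter] at hπ hσ
      have hπ2 : inversions π ≤ k := by simpa using hπ
      have hσ2 : inversions σ ≤ k := by simpa using hσ
      simp only [dif_pos (card_multOf hπ2), dif_pos (card_multOf hσ2)] at hfeq
      have hm : multOf k π = multOf k σ := by
        simpa [card_multOf hπ2, card_multOf hσ2] using congrArg Subtype.val hfeq
      apply code_injective
      intro i
      rw [← count_multOf (k := k) π i, ← count_multOf (k := k) σ i, hm]
  refine hstep.trans ?_
  rw [Sym.card_sym_eq_multichoose, Nat.multichoose_eq]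
  simp

open Classical in
/-- For `n ≥ 1` and `r ≥ 0`, the number of permutations of `{1,…,n}` with at most `r`
inversions satisfies `log |B(id, r)| ≤ n log(1 + r/n) + n`. -/
theorem stmt6 (n : ℕ) (hn : 1 ≤ n) (r : ℝ) (hr : 0 ≤ r) :
    Real.log ((Finset.univ.filter
        (fun π : Equiv.Perm (Fin n) => (inversions π : ℝ) ≤ r)).card)
      ≤ n * Real.log (1 + r / n) + n := by
  classical
  set k := ⌊r⌋₊ with hk
  have hn0 : (0:ℝ) < n := by exact_mod_cast hn
  have hset : (Finset.univ.filter (fun π : Equiv.Perm (Fin n) => (inversions π : ℝ) ≤ r))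
      = Finset.univ.filter (fun π : Equiv.Perm (Fin n) => inversions π ≤ k) := by
    apply Finset.filter_congr
    intro π _
    simp [hk, Nat.le_floor_iff hr]
  rw [hset]
  set S := Finset.univ.filter (fun π : Equiv.Perm (Fin n) => inversions π ≤ k) with hS
  have hmem : (1 : Equiv.Perm (Fin n)) ∈ S := by
    rw [hS, Finset.mem_filter]
    refine ⟨Finset.mem_univ _, ?_⟩
    have h0 : inversions (1 : Equiv.Perm (Fin n)) = 0 := by
      rw [inversions, Finset.card_eq_zero, Finset.filter_eq_empty_iff]
      rintro p - ⟨h1, h2⟩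
      simp only [Equiv.Perm.coe_one, id] at h2
      exact absurd (h1.trans h2) (lt_irrefl _)
    rw [h0]
    exact Nat.zero_le _
  have hpos : 0 < S.card := Finset.card_pos.2 ⟨1, hmem⟩
  have hchoose : S.card ≤ (n + k).choose n := by
    have h1 := card_le_choose n k
    have h2 := Nat.choose_symm (Nat.le_add_left k n)
    simp only [Nat.add_sub_cancel] at h2
    rw [h2]
    exact h1
  have hexp : ((n:ℝ))^n / n.factorial ≤ Real.exp n := by
    have hsum := Real.sum_le_exp_of_nonneg (x := (n:ℝ)) (by positivity) (n+1)
    refine le_trans ?_ hsum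
    refine Finset.single_le_sum (f := fun i => (n:ℝ)^i / i.factorial) ?_ ?_
    · intro i _; positivity
    · exact Finset.self_mem_range_succ n
  have hb : ((n + k).choose n : ℝ) ≤ (1 + (k:ℝ)/n)^n * Real.exp n := by
    have h1 : ((n + k).choose n : ℝ) ≤ ((n+k : ℕ):ℝ)^n / n.factorial :=
      Nat.choose_le_pow_div n (n+k)
    refine h1.trans ?_
    have e1 : ((n+k : ℕ):ℝ) = (n:ℝ) + k := by push_cast; ring
    rw [e1]
    have e2 : ((n:ℝ) + k)^n / n.factorial
        = (1 + (k:ℝ)/n)^n * ((n:ℝ)^n / n.factorial) := by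
      have e3 : (1 + (k:ℝ)/n) = ((n:ℝ)+k)/n := by field_simp
      rw [e3, div_pow]
      have hf : (0:ℝ) < (n.factorial : ℝ) := by exact_mod_cast n.factorial_pos
      field_simp
    rw [e2]
    exact mul_le_mul_of_nonneg_left hexp (by positivity)
  have hcast : (S.card : ℝ) ≤ (1 + (k:ℝ)/n)^n * Real.exp n :=
    le_trans (by exact_mod_cast hchoose) hb
  have hlog : Real.log S.card ≤ Real.log ((1 + (k:ℝ)/n)^n * Real.exp n) :=
    Real.log_le_log (by exact_mod_cast hpos) hcast
  calc Real.log S.card ≤ Real.log ((1 + (k:ℝ)/n)^n * Real.exp n) := hlog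
    _ = n * Real.log (1 + (k:ℝ)/n) + n := by
        rw [Real.log_mul (by positivity) (Real.exp_ne_zero _), Real.log_pow, Real.log_exp]
    _ ≤ n * Real.log (1 + r/n) + n := by
        have hkr : (k:ℝ) ≤ r := Nat.floor_le hr
        have hlog2 : Real.log (1 + (k:ℝ)/n) ≤ Real.log (1 + r/n) := by
          apply Real.log_le_log (by positivity)
          have : (k:ℝ)/n ≤ r/n := by gcongr
          linarith
        have : (0:ℝ) ≤ n := le_of_lt hn0
        nlinarith [hlog2]
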